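/- Let 0 < r < 1, define f(m) = r(6m + 8m² + 3m³)(1 + m)^{−3} for m ≠ −1 and g(m) = 6m + 4m² + m³, and let m* ∈ (−1, 0) be the unique solution of f(m) = g(m) in (−1, 0). Then 0 < 1 + m* < 1, g′(m*) > 0, and f′(m*) > g′(m*); in particular f′(m*)/g′(m*) > 1, so the blown-up map at the swan point has a hyperbolic saddle at (0, m*) with contracting eigenvalue 1 + m* ∈ (0, 1) and expanding eigenvalue f′(m*)/g′(m*) > 1. -/

import Mathlib

/-- **Hyperbolicity of the swan-point fixed point `(0, m*)`.**
Let `0 < r < 1`, `f(m) = r(6m + 8m² + 3m³)(1 + m)⁻³` (for `m ≠ −1`),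
`g(m) = 6m + 4m² + m³`, and let `m* ∈ (−1, 0)` be the unique solution of
`f(m) = g(m)` in `(−1, 0)`.  Then `0 < 1 + m* < 1`, `g′(m*) > 0` and
`f′(m*) > g′(m*)`; in particular `f′(m*)/g′(m*) > 1`, so the blown-up map at the
swan point has a hyperbolic saddle at `(0, m*)` with contracting eigenvalue
`1 + m* ∈ (0, 1)` and expanding eigenvalue `f′(m*)/g′(m*) > 1`. -/
theorem swan_saddle_hyperbolic (r : ℝ) (hr0 : 0 < r) (hr1 : r < 1)
    (f g : ℝ → ℝ)
    (hf : ∀ m : ℝ, m ≠ -1 →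
      f m = r * (6 * m + 8 * m ^ 2 + 3 * m ^ 3) / (1 + m) ^ 3)
    (hg : ∀ m : ℝ, g m = 6 * m + 4 * m ^ 2 + m ^ 3)
    (ms : ℝ) (hms : ms ∈ Set.Ioo (-1 : ℝ) 0) (hfg : f ms = g ms)
    (huniq : ∀ m ∈ Set.Ioo (-1 : ℝ) 0, f m = g m → m = ms) :
    0 < 1 + ms ∧ 1 + ms < 1 ∧
    0 < deriv g ms ∧ deriv g ms < deriv f ms ∧
    1 < deriv f ms / deriv g ms := by
  obtain ⟨hm1, hm0⟩ := hms
  have hpos : 0 < 1 + ms := by linarith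
  have hne : (1 + ms) ≠ 0 := ne_of_gt hpos
  have hmsne : ms ≠ -1 := by intro h; rw [h] at hm1; linarith
  -- derivative of g
  have hgd : HasDerivAt g (6 + 8 * ms + 3 * ms ^ 2) ms := by
    have h : HasDerivAt (fun m : ℝ => 6 * m + 4 * m ^ 2 + m ^ 3)
        (6 + 8 * ms + 3 * ms ^ 2) ms := by
      have := (((hasDerivAt_id ms).const_mul (6 : ℝ)).add
        ((hasDerivAt_pow 2 ms).const_mul 4)).add (hasDerivAt_pow 3 ms)
      refine this.congr_deriv ?_
      push_cast; ring
    have hge : g = fun m : ℝ => 6 * m + 4 * m ^ 2 + m ^ 3 := funext hg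
    rw [hge]; exact h
  have hdg : deriv g ms = 6 + 8 * ms + 3 * ms ^ 2 := hgd.deriv
  -- derivative of f
  set F : ℝ → ℝ := fun m => r * (6 * m + 8 * m ^ 2 + 3 * m ^ 3) / (1 + m) ^ 3 with hF
  have hev : f =ᶠ[nhds ms] F := by
    have hopen : IsOpen {m : ℝ | m ≠ -1} := isOpen_compl_singleton
    exact Filter.eventuallyEq_of_mem (hopen.mem_nhds hmsne) fun m hm => hf m hm
  have hN : HasDerivAt (fun m : ℝ => r * (6 * m + 8 * m ^ 2 + 3 * m ^ 3))
      (r * (6 + 16 * ms + 9 * ms ^ 2)) ms := by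
    have h : HasDerivAt (fun m : ℝ => 6 * m + 8 * m ^ 2 + 3 * m ^ 3)
        (6 + 16 * ms + 9 * ms ^ 2) ms := by
      have := (((hasDerivAt_id ms).const_mul (6 : ℝ)).add
        ((hasDerivAt_pow 2 ms).const_mul 8)).add ((hasDerivAt_pow 3 ms).const_mul 3)
      refine this.congr_deriv ?_
      push_cast; ring
    exact h.const_mul r
  have hD : HasDerivAt (fun m : ℝ => (1 + m) ^ 3) (3 * (1 + ms) ^ 2) ms := by
    have h := ((hasDerivAt_id ms).const_add (1 : ℝ)).pow 3
    exact h.congr_deriv (by simp)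
  have hDne : ((1 : ℝ) + ms) ^ 3 ≠ 0 := pow_ne_zero _ hne
  have hFd : HasDerivAt F
      ((r * (6 + 16 * ms + 9 * ms ^ 2) * (1 + ms) ^ 3 -
        r * (6 * ms + 8 * ms ^ 2 + 3 * ms ^ 3) * (3 * (1 + ms) ^ 2)) /
        ((1 + ms) ^ 3) ^ 2) ms := hN.div hD hDne
  have hdf : deriv f ms = r * (6 + 4 * ms + ms ^ 2) / (1 + ms) ^ 4 := by
    rw [hev.deriv_eq, hFd.deriv]
    field_simp
    ring
  -- the fixed point relation: r * B = A * (1+ms)^3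
  have hmne : ms ≠ 0 := ne_of_lt hm0
  have key : r * (6 + 8 * ms + 3 * ms ^ 2) = (6 + 4 * ms + ms ^ 2) * (1 + ms) ^ 3 := by
    have h1 : f ms = r * (6 * ms + 8 * ms ^ 2 + 3 * ms ^ 3) / (1 + ms) ^ 3 := hf ms hmsne
    have h2 : g ms = 6 * ms + 4 * ms ^ 2 + ms ^ 3 := hg ms
    rw [h1, h2] at hfg
    have h3 : r * (6 * ms + 8 * ms ^ 2 + 3 * ms ^ 3) =
        (6 * ms + 4 * ms ^ 2 + ms ^ 3) * (1 + ms) ^ 3 := by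
      field_simp at hfg
      linear_combination ms * hfg
    have h4 : ms * (r * (6 + 8 * ms + 3 * ms ^ 2)) =
        ms * ((6 + 4 * ms + ms ^ 2) * (1 + ms) ^ 3) := by ring_nf; ring_nf at h3; linarith
    exact mul_left_cancel₀ hmne h4
  -- positivity facts
  have hA : 0 < 6 + 4 * ms + ms ^ 2 := by nlinarith [sq_nonneg (ms + 2)]
  have hB : 0 < 6 + 8 * ms + 3 * ms ^ 2 := by nlinarith [sq_nonneg (3 * ms + 4)]
  have hg' : 0 < deriv g ms := by rw [hdg]; exact hB
  -- A > B
  have hAB : 6 + 8 * ms + 3 * ms ^ 2 < 6 + 4 * ms + ms ^ 2 := by nlinarith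
  -- main inequality: A^2 > B^2 (1+ms)
  have hmain : (6 + 8 * ms + 3 * ms ^ 2) ^ 2 * (1 + ms) < (6 + 4 * ms + ms ^ 2) ^ 2 := by
    nlinarith [sq_nonneg (6 + 8 * ms + 3 * ms ^ 2), mul_pos hB hB]
  have hlt : deriv g ms < deriv f ms := by
    rw [hdg, hdf]
    rw [lt_div_iff₀ (by positivity : (0:ℝ) < (1 + ms) ^ 4)]
    nlinarith [mul_lt_mul_of_pos_right hmain (pow_pos hpos 3), key, hB, hA,
      mul_pos hA (pow_pos hpos 3)]
  refine ⟨hpos, by linarith, hg', hlt, (one_lt_div hg').mpr hlt⟩
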